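/- Hoffman's circulation theorem: in a finite directed graph D = (V,A) with lower bounds ℓ_a and upper bounds u_a on arcs with 0 ≤ ℓ_a ≤ u_a, there exists a circulation f : A → ℝ≥0 (flow conservation at every vertex) with ℓ_a ≤ f(a) ≤ u_a for all a, if and only if ℓ(∂⁺(U)) ≤ u(∂⁻(U)) for all U ⊆ V. Moreover, if ℓ and u are integral, f can be chosen integral. -/

import Mathlib

set_option linter.unusedSectionVars false
set_option maxHeartbeats 1000000


open Finset

variable {V : Type*} [Fintype V] [DecidableEq V]

/-- Total `x`-weight of arcs from `A` to `B`. -/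
def flowBtw (x : V → V → ℝ) (A B : Finset V) : ℝ := ∑ u ∈ A, ∑ v ∈ B, x u v

/-- `x(∂⁺(U))`: weight of arcs leaving `U`. -/
def cutOut (x : V → V → ℝ) (U : Finset V) : ℝ := flowBtw x U Uᶜ

/-- `x(∂⁻(U))`: weight of arcs entering `U`. -/
def cutIn (x : V → V → ℝ) (U : Finset V) : ℝ := flowBtw x Uᶜ U

/-- Feasibility for the ATSPP subtour elimination LP on the complete digraph on `V`. -/
structure FeasLP (s t : V) (x : V → V → ℝ) : Prop where
  nonneg : ∀ u v, 0 ≤ x u v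
  diag : ∀ v, x v v = 0
  outS : ∑ v, x s v = 1
  inS : ∑ v, x v s = 0
  inT : ∑ v, x v t = 1
  outT : ∑ v, x t v = 0
  outDeg : ∀ v, v ≠ s → v ≠ t → ∑ w, x v w = 1
  inDeg : ∀ v, v ≠ s → v ≠ t → ∑ w, x w v = 1
  cut : ∀ U : Finset V, s ∈ U → U ≠ Finset.univ → 1 ≤ cutOut x U

/-- `f` is a circulation: flow conservation at every vertex. -/
def IsCirculation (f : V → V → ℝ) : Prop := ∀ v : V, ∑ u, f u v = ∑ w, f v w


namespace Hoffman



/-- excess: inflow minus outflow. -/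
def excess (f : V → V → ℝ) (v : V) : ℝ := (∑ u, f u v) - (∑ w, f v w)

/-- potential -/
def phi (f : V → V → ℝ) : ℝ := ∑ v, max (excess f v) 0

lemma phi_nonneg (f : V → V → ℝ) : 0 ≤ phi f :=
  Finset.sum_nonneg fun _ _ => le_max_right _ _

lemma sum_excess (f : V → V → ℝ) : ∑ v, excess f v = 0 := by
  simp only [excess, Finset.sum_sub_distrib]
  rw [Finset.sum_comm]
  ring

def upd (f : V → V → ℝ) (a b : V) (ε : ℝ) : V → V → ℝ :=
  fun u v => f u v + if u = a ∧ v = b then ε else 0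

lemma upd_self (f : V → V → ℝ) (a b : V) (ε : ℝ) : upd f a b ε a b = f a b + ε := by
  simp [upd]

lemma upd_of_ne (f : V → V → ℝ) (a b : V) (ε : ℝ) {u v : V} (h : ¬(u = a ∧ v = b)) :
    upd f a b ε u v = f u v := by
  simp [upd, h]

lemma excess_upd (f : V → V → ℝ) (a b : V) (ε : ℝ) (v : V) :
    excess (upd f a b ε) v
      = excess f v + (if v = b then ε else 0) - (if v = a then ε else 0) := by
  have h1 : ∑ u, upd f a b ε u v = (∑ u, f u v) + (if v = b then ε else 0) := by
    unfold upd
    rw [Finset.sum_add_distrib]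
    congr 1
    by_cases h : v = b <;> simp [h]
  have h2 : ∑ w, upd f a b ε v w = (∑ w, f v w) + (if v = a then ε else 0) := by
    unfold upd
    rw [Finset.sum_add_distrib]
    congr 1
    by_cases h : v = a <;> simp [h]
  unfold excess
  rw [h1, h2]
  ring




lemma phi_lt (f f' : V → V → ℝ) (a b : V) (hab : a ≠ b) (ε : ℝ) (hε : 0 < ε)
    (ha : ε ≤ excess f a) (hb : excess f b ≤ -ε)
    (hexc : ∀ v, excess f' v
      = excess f v + (if v = b then ε else 0) - (if v = a then ε else 0)) :
    phi f' < phi f := by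
  apply Finset.sum_lt_sum
  · intro v _
    rw [hexc v]
    by_cases hva : v = a
    · simp only [hva, if_neg hab, if_pos rfl, if_true]
      have h1 : 0 ≤ excess f a - ε := by linarith
      rw [show excess f a + 0 - ε = excess f a - ε by ring,
        max_eq_left h1, max_eq_left (by linarith : (0:ℝ) ≤ excess f a)]
      linarith
    · by_cases hvb : v = b
      · simp only [hvb, if_pos rfl, if_neg (hvb ▸ hva : b ≠ a), if_true]
        rw [show excess f b + ε - 0 = excess f b + ε by ring,
          max_eq_right (by linarith), max_eq_right (by linarith)]
      · simp [hva, hvb]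
  · refine ⟨a, Finset.mem_univ a, ?_⟩
    rw [hexc a]
    simp only [if_neg hab, if_pos rfl, if_true]
    have h1 : 0 ≤ excess f a - ε := by linarith
    rw [show excess f a + 0 - ε = excess f a - ε by ring,
      max_eq_left h1, max_eq_left (by linarith : (0:ℝ) ≤ excess f a)]
    linarith

lemma phi_eq (f f' : V → V → ℝ) (a b : V) (hab : a ≠ b) (ε : ℝ) (hε : 0 < ε)
    (ha : ε ≤ excess f a) (hb : 0 ≤ excess f b)
    (hexc : ∀ v, excess f' v
      = excess f v + (if v = b then ε else 0) - (if v = a then ε else 0)) :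
    phi f' = phi f := by
  have key : ∀ v, max (excess f' v) 0
      = max (excess f v) 0 + (if v = b then ε else 0) - (if v = a then ε else 0) := by
    intro v
    rw [hexc v]
    by_cases hva : v = a
    · simp only [hva, if_neg hab, if_pos rfl, if_true]
      rw [max_eq_left (by linarith), max_eq_left (by linarith : (0:ℝ) ≤ excess f a)]
    · by_cases hvb : v = b
      · simp only [hvb, if_pos rfl, if_neg (hvb ▸ hva : b ≠ a), if_true]
        rw [max_eq_left (by linarith), max_eq_left hb]
      · simp [hva, hvb]
  unfold phi
  rw [Finset.sum_congr rfl (fun v _ => key v)]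
  rw [Finset.sum_sub_distrib, Finset.sum_add_distrib]
  simp

/-- A chain can be shrunk to a duplicate-free chain with the same endpoints. -/
lemma chain_shrink {α : Type*} (r : α → α → Prop) :
    ∀ (n : ℕ) (l : List α), l.length = n → l.Chain' r →
      ∃ l' : List α, l'.Chain' r ∧ l'.Nodup ∧ (∀ x ∈ l', x ∈ l) ∧
        l'.head? = l.head? ∧ l'.getLast? = l.getLast? := by
  intro n
  induction n using Nat.strong_induction_on with
  | _ n ih =>
    intro l hlen hch
    match l with
    | [] => exact ⟨[], List.isChain_nil, List.nodup_nil, by simp, rfl, rfl⟩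
    | a :: t =>
      by_cases hat : a ∈ t
      · obtain ⟨t₁, t₂, rfl⟩ := List.append_of_mem hat
        have hsuf : (a :: t₂) <:+ (a :: (t₁ ++ a :: t₂)) := by
          refine (List.suffix_cons_iff).2 (Or.inr ?_)
          exact ⟨t₁, rfl⟩
        have hch' : (a :: t₂).Chain' r := hch.suffix hsuf
        have hlt : (a :: t₂).length < n := by
          subst hlen; simp
        obtain ⟨l', h1, h2, h3, h4, h5⟩ := ih _ hlt (a :: t₂) rfl hch'
        refine ⟨l', h1, h2, fun x hx => hsuf.subset (h3 x hx), ?_, ?_⟩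
        · rw [h4]; rfl
        · rw [h5]
          show (a :: t₂).getLast? = ([a] ++ (t₁ ++ a :: t₂)).getLast?
          rw [List.getLast?_append, List.getLast?_append]
          have : (a :: t₂).getLast? ≠ none := by simp
          cases h : (a :: t₂).getLast? with
          | none => exact absurd h this
          | some x => simp [h]
      · match t with
        | [] => exact ⟨[a], List.isChain_singleton a, List.nodup_singleton a, by simp, rfl, rfl⟩
        | b :: t' =>
          have hlt : (b :: t').length < n := by subst hlen; simp
          obtain ⟨l', h1, h2, h3, h4, h5⟩ := ih _ hlt (b :: t') rfl hch.tail
          have hl'ne : l' ≠ [] := by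
            intro h; subst h; simp at h4
          obtain ⟨c, l'', rfl⟩ := List.exists_cons_of_ne_nil hl'ne
          have hcb : c = b := by simpa using h4
          have hanotin : a ∉ c :: l'' := fun h => hat (h3 _ h)
          refine ⟨a :: c :: l'', ?_, ?_, ?_, by simp [hcb], ?_⟩
          · rw [List.Chain', List.isChain_cons_cons]
            refine ⟨?_, h1⟩
            rw [hcb]
            exact (List.isChain_cons_cons.1 hch).1
          · exact List.nodup_cons.2 ⟨hanotin, h2⟩
          · intro x hx
            rcases List.mem_cons.1 hx with h | h
            · simp [h]
            · exact List.mem_cons_of_mem a (h3 x h)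
          · rw [List.getLast?_cons_cons, List.getLast?_cons_cons, h5]



def IntV (g : V → V → ℝ) : Prop := ∀ u v, ∃ n : ℤ, g u v = n
def Resid (lo hi f : V → V → ℝ) (u v : V) : Prop :=
  u ≠ v ∧ (f u v < hi u v ∨ lo v u < f v u)


lemma int_min {x y : ℝ} (hx : ∃ n : ℤ, x = n) (hy : ∃ n : ℤ, y = n) :
    ∃ n : ℤ, min x y = n := by
  obtain ⟨n, rfl⟩ := hx; obtain ⟨m, rfl⟩ := hy
  exact ⟨min n m, by push_cast; rfl⟩

lemma int_sub {x y : ℝ} (hx : ∃ n : ℤ, x = n) (hy : ∃ n : ℤ, y = n) :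
    ∃ n : ℤ, x - y = n := by
  obtain ⟨n, rfl⟩ := hx; obtain ⟨m, rfl⟩ := hy
  exact ⟨n - m, by push_cast; rfl⟩

lemma int_neg {x : ℝ} (hx : ∃ n : ℤ, x = n) : ∃ n : ℤ, -x = n := by
  obtain ⟨n, rfl⟩ := hx; exact ⟨-n, by push_cast; rfl⟩

lemma excess_int {f : V → V → ℝ} (hf : IntV f) (v : V) : ∃ n : ℤ, excess f v = n := by
  choose N hN using hf
  refine ⟨(∑ u, N u v) - (∑ w, N v w), ?_⟩
  simp only [excess, hN]
  push_cast
  ring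

lemma chain'_mono_mem {α : Type*} {r s : α → α → Prop} :
    ∀ (l : List α), l.Chain' r → (∀ x ∈ l, ∀ y ∈ l, r x y → s x y) → l.Chain' s := by
  intro l
  induction l with
  | nil => intros; exact List.isChain_nil
  | cons a t ih =>
    intro h hm
    cases t with
    | nil => exact List.isChain_singleton a
    | cons b t' =>
      rw [List.Chain', List.isChain_cons_cons] at h ⊢
      exact ⟨hm a (by simp) b (by simp) h.1,
        ih h.2 fun x hx y hy => hm x (List.mem_cons_of_mem _ hx) y (List.mem_cons_of_mem _ hy)⟩

/-- One augmentation step along a residual arc `a → b`, pushing some `0 < ε ≤ δ`. -/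
lemma step (lo hi : V → V → ℝ) (P : (V → V → ℝ) → Prop)
    (hP : ∀ (f : V → V → ℝ) (a b : V) (ε : ℝ), P f → (IntV f → IntV lo → IntV hi → ∃ n : ℤ, ε = (n : ℝ)) → P (upd f a b ε))
    (f : V → V → ℝ) (hbox : ∀ u v, lo u v ≤ f u v ∧ f u v ≤ hi u v) (hPf : P f)
    (a b : V) (hab : a ≠ b) (hres : f a b < hi a b ∨ lo b a < f b a)
    (δ : ℝ) (hδpos : 0 < δ)
    (hδint : IntV f → IntV lo → IntV hi → ∃ n : ℤ, δ = n) :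
    ∃ (f' : V → V → ℝ) (ε : ℝ), 0 < ε ∧ ε ≤ δ ∧
      (∀ u v, lo u v ≤ f' u v ∧ f' u v ≤ hi u v) ∧ P f' ∧
      (∀ v, excess f' v
        = excess f v + (if v = b then ε else 0) - (if v = a then ε else 0)) ∧
      (∀ x y, x ≠ a → y ≠ a → f' x y = f x y) := by
  rcases hres with hf | hb
  · set ε := min δ (hi a b - f a b) with hε
    have hεpos : 0 < ε := lt_min hδpos (by linarith)
    refine ⟨upd f a b ε, ε, hεpos, min_le_left _ _, ?_, ?_, fun v => excess_upd f a b ε v, ?_⟩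
    · intro u v
      by_cases h : u = a ∧ v = b
      · obtain ⟨rfl, rfl⟩ := h
        rw [upd_self]
        constructor
        · linarith [(hbox u v).1]
        · have := min_le_right δ (hi u v - f u v)
          linarith
      · rw [upd_of_ne _ _ _ _ h]; exact hbox u v
    · exact hP f a b ε hPf fun h1 h2 h3 =>
        int_min (hδint h1 h2 h3) (int_sub (h3 a b) (h1 a b))
    · intro x y hx _
      exact upd_of_ne _ _ _ _ fun h => hx h.1
  · set ε := min δ (f b a - lo b a) with hε
    have hεpos : 0 < ε := lt_min hδpos (by linarith)
    refine ⟨upd f b a (-ε), ε, hεpos, min_le_left _ _, ?_, ?_, ?_, ?_⟩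
    · intro u v
      by_cases h : u = b ∧ v = a
      · obtain ⟨rfl, rfl⟩ := h
        rw [upd_self]
        constructor
        · have := min_le_right δ (f u v - lo u v)
          linarith
        · linarith [(hbox u v).2]
      · rw [upd_of_ne _ _ _ _ h]; exact hbox u v
    · exact hP f b a (-ε) hPf fun h1 h2 h3 =>
        int_neg (int_min (hδint h1 h2 h3) (int_sub (h1 b a) (h2 b a)))
    · intro v
      rw [excess_upd]
      by_cases h1 : v = a <;> by_cases h2 : v = b <;> simp [h1, h2, hab, Ne.symm hab] <;> ring
    · intro x y _ hy
      exact upd_of_ne _ _ _ _ fun h => hy h.2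

/-- Augmenting along a nodup residual path from a vertex with positive excess to one
with negative excess strictly decreases `phi`. -/
lemma aug (lo hi : V → V → ℝ) (P : (V → V → ℝ) → Prop)
    (hP : ∀ (f : V → V → ℝ) (a b : V) (ε : ℝ), P f →
      (IntV f → IntV lo → IntV hi → ∃ n : ℤ, ε = (n : ℝ)) → P (upd f a b ε)) :
    ∀ (n : ℕ) (f : V → V → ℝ) (l : List V) (v₀ w : V),
      l.length = n →
      (v₀ :: l).Chain' (Resid lo hi f) → (v₀ :: l).Nodup →
      (∀ u v, lo u v ≤ f u v ∧ f u v ≤ hi u v) → P f →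
      0 < excess f v₀ → (v₀ :: l).getLast? = some w → excess f w < 0 →
      ∃ f', (∀ u v, lo u v ≤ f' u v ∧ f' u v ≤ hi u v) ∧ P f' ∧ phi f' < phi f := by
  intro n
  induction n using Nat.strong_induction_on with
  | _ n ih =>
    intro f l v₀ w hlen hch hnd hbox hPf hv₀ hlast hw
    match l with
    | [] =>
      have hwv : w = v₀ := by simpa using hlast.symm
      rw [hwv] at hw
      linarith
    | v₁ :: rest =>
      obtain ⟨⟨hne01, hres⟩, hch2⟩ := List.isChain_cons_cons.1 hch
      have hv0notin : v₀ ∉ v₁ :: rest := (List.nodup_cons.1 hnd).1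
      have hnd2 : (v₁ :: rest).Nodup := (List.nodup_cons.1 hnd).2
      rw [List.getLast?_cons_cons] at hlast
      have hwne0 : w ≠ v₀ := fun h => by rw [h] at hw; linarith
      by_cases hneg : excess f v₁ < 0
      · -- augment the single arc v₀ → v₁ and finish
        set δ := min (excess f v₀) (-excess f v₁) with hδ
        have hδpos : 0 < δ := lt_min hv₀ (by linarith)
        obtain ⟨f', ε, hεpos, hεδ, hbox', hPf', hexc, _⟩ :=
          step lo hi P hP f hbox hPf v₀ v₁ hne01 hres δ hδpos
            (fun h1 h2 h3 => int_min (excess_int h1 v₀) (int_neg (excess_int h1 v₁)))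
        refine ⟨f', hbox', hPf', ?_⟩
        refine phi_lt f f' v₀ v₁ hne01 ε hεpos ?_ ?_ hexc
        · exact le_trans hεδ (min_le_left _ _)
        · have := le_trans hεδ (min_le_right _ _)
          linarith
      · -- push to v₁, keep phi, recurse on the shorter path
        push_neg at hneg
        have hwne1 : w ≠ v₁ := fun h => by rw [h] at hw; linarith
        obtain ⟨f₁, ε, hεpos, hεδ, hbox1, hPf1, hexc, hagree⟩ :=
          step lo hi P hP f hbox hPf v₀ v₁ hne01 hres (excess f v₀) hv₀
            (fun h1 _ _ => excess_int h1 v₀)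
        have hphi : phi f₁ = phi f :=
          phi_eq f f₁ v₀ v₁ hne01 ε hεpos hεδ hneg hexc
        have hch1 : (v₁ :: rest).Chain' (Resid lo hi f₁) := by
          refine chain'_mono_mem _ hch2 ?_
          intro x hx y hy hr
          have hx0 : x ≠ v₀ := fun h => hv0notin (h ▸ hx)
          have hy0 : y ≠ v₀ := fun h => hv0notin (h ▸ hy)
          refine ⟨hr.1, ?_⟩
          rw [hagree x y hx0 hy0, hagree y x hy0 hx0]
          exact hr.2
        have hexc1 : 0 < excess f₁ v₁ := by
          have := hexc v₁
          rw [if_pos rfl, if_neg (Ne.symm hne01)] at this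
          linarith
        have hexcw : excess f₁ w < 0 := by
          have := hexc w
          rw [if_neg hwne1, if_neg hwne0] at this
          linarith
        have hlt : rest.length < n := by rw [List.length_cons] at hlen; omega
        obtain ⟨f', hbox', hPf', hphi'⟩ :=
          ih rest.length hlt f₁ rest v₁ w rfl hch1 hnd2 hbox1 hPf1 hexc1 hlast hexcw
        exact ⟨f', hbox', hPf', by linarith⟩


lemma int_add {x y : ℝ} (hx : ∃ n : ℤ, x = n) (hy : ∃ n : ℤ, y = n) :
    ∃ n : ℤ, x + y = n := by
  obtain ⟨n, rfl⟩ := hx; obtain ⟨m, rfl⟩ := hy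
  exact ⟨n + m, by push_cast; rfl⟩

lemma int_sum {ι : Type*} (s : Finset ι) (f : ι → ℝ) (h : ∀ i ∈ s, ∃ n : ℤ, f i = n) :
    ∃ n : ℤ, ∑ i ∈ s, f i = n := by
  classical
  induction s using Finset.induction_on with
  | empty => exact ⟨0, by simp⟩
  | insert _ _ hnotmem ih =>
    rename_i a s
    rw [Finset.sum_insert hnotmem]
    obtain ⟨n, hn⟩ := h a (Finset.mem_insert_self a s)
    obtain ⟨m, hm⟩ := ih fun i hi => h i (Finset.mem_insert_of_mem hi)
    exact ⟨n + m, by rw [hn, hm]; push_cast; rfl⟩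

lemma int_max0 {x : ℝ} (hx : ∃ n : ℤ, x = n) : ∃ n : ℤ, max x 0 = n := by
  obtain ⟨n, rfl⟩ := hx
  exact ⟨max n 0, by push_cast; rfl⟩

lemma phi_nat {g : V → V → ℝ} (hg : IntV g) : ∃ n : ℕ, phi g = n := by
  obtain ⟨m, hm⟩ := int_sum Finset.univ _ fun v _ => int_max0 (excess_int hg v)
  have hm' : phi g = (m : ℝ) := hm
  have h0 : (0:ℝ) ≤ m := hm' ▸ phi_nonneg g
  refine ⟨m.toNat, ?_⟩
  rw [hm']
  have : (0:ℤ) ≤ m := by exact_mod_cast h0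
  exact_mod_cast (Int.toNat_of_nonneg this).symm

lemma sum_excess_subset (f : V → V → ℝ) (U : Finset V) :
    ∑ v ∈ U, excess f v = cutIn f U - cutOut f U := by
  unfold excess cutIn cutOut flowBtw
  rw [Finset.sum_sub_distrib]
  have h1 : ∑ v ∈ U, ∑ u, f u v
      = (∑ v ∈ U, ∑ u ∈ U, f u v) + ∑ v ∈ U, ∑ u ∈ Uᶜ, f u v := by
    rw [← Finset.sum_add_distrib]
    exact Finset.sum_congr rfl fun v _ => (Finset.sum_add_sum_compl U fun u => f u v).symm
  have h2 : ∑ v ∈ U, ∑ w, f v w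
      = (∑ v ∈ U, ∑ w ∈ U, f v w) + ∑ v ∈ U, ∑ w ∈ Uᶜ, f v w := by
    rw [← Finset.sum_add_distrib]
    exact Finset.sum_congr rfl fun v _ => (Finset.sum_add_sum_compl U fun w => f v w).symm
  have hA : ∑ v ∈ U, ∑ u ∈ U, f u v = ∑ v ∈ U, ∑ w ∈ U, f v w := Finset.sum_comm
  have hB : ∑ v ∈ U, ∑ u ∈ Uᶜ, f u v = ∑ u ∈ Uᶜ, ∑ v ∈ U, f u v := Finset.sum_comm
  rw [h1, h2, hA, hB]
  ring

lemma exists_circulation (lo hi : V → V → ℝ)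
    (hcut : ∀ U : Finset V, cutOut lo U ≤ cutIn hi U)
    (P : (V → V → ℝ) → Prop)
    (hP : ∀ (f : V → V → ℝ) (a b : V) (ε : ℝ), P f →
      (IntV f → IntV lo → IntV hi → ∃ n : ℤ, ε = (n : ℝ)) → P (upd f a b ε))
    (f : V → V → ℝ) (hbox : ∀ u v, lo u v ≤ f u v ∧ f u v ≤ hi u v) (hPf : P f)
    (hmin : ∀ g, (∀ u v, lo u v ≤ g u v ∧ g u v ≤ hi u v) → P g → phi f ≤ phi g) :
    IsCirculation f := by
  classical
  have hnopos : ∀ v₀, ¬ 0 < excess f v₀ := by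
    intro v₀ hv₀
    set U : Finset V :=
      Finset.univ.filter (fun v => Relation.ReflTransGen (Resid lo hi f) v₀ v) with hU
    by_cases hex : ∃ w ∈ U, excess f w < 0
    · obtain ⟨w, hwU, hw⟩ := hex
      have hreach : Relation.ReflTransGen (Resid lo hi f) v₀ w := (Finset.mem_filter.1 hwU).2
      obtain ⟨l, hchain, hgl⟩ := List.exists_isChain_cons_of_relationReflTransGen hreach
      have hch' : (v₀ :: l).Chain' (Resid lo hi f) := hchain
      have hgl' : (v₀ :: l).getLast? = some w := by
        rw [List.getLast?_eq_getLast (List.cons_ne_nil _ _), hgl]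
      obtain ⟨l', hch'', hnd, hsub, hhead, hlast⟩ :=
        chain_shrink (Resid lo hi f) (v₀ :: l).length (v₀ :: l) rfl hch'
      have hl'ne : l' ≠ [] := by intro h; rw [h] at hhead; simp at hhead
      obtain ⟨c, t, rfl⟩ := List.exists_cons_of_ne_nil hl'ne
      have hcv : c = v₀ := by simpa using hhead
      rw [hcv] at hch'' hnd hlast
      obtain ⟨f', hbox', hPf', hphi⟩ :=
        aug lo hi P hP t.length f t v₀ w rfl hch'' hnd hbox hPf hv₀
          (hlast.trans hgl') hw
      exact absurd (hmin f' hbox' hPf') (by linarith)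
    · push_neg at hex
      have hvU : v₀ ∈ U := Finset.mem_filter.2 ⟨Finset.mem_univ _, Relation.ReflTransGen.refl⟩
      have hpos : 0 < ∑ v ∈ U, excess f v :=
        Finset.sum_pos' (fun v hv => hex v hv) ⟨v₀, hvU, hv₀⟩
      rw [sum_excess_subset] at hpos
      have hsat : ∀ u ∈ U, ∀ v ∈ Uᶜ, f u v = hi u v ∧ f v u = lo v u := by
        intro u hu v hv
        have hnr : ¬ Resid lo hi f u v := by
          intro hr
          exact (Finset.mem_compl.1 hv) (Finset.mem_filter.2
            ⟨Finset.mem_univ _, ((Finset.mem_filter.1 hu).2).tail hr⟩)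
        have hne : u ≠ v := fun h => (Finset.mem_compl.1 hv) (h ▸ hu)
        rw [Resid] at hnr
        push_neg at hnr
        obtain ⟨h2, h3⟩ := hnr hne
        exact ⟨le_antisymm (hbox u v).2 h2, le_antisymm h3 (hbox v u).1⟩
      have hcutIn : cutIn f U = cutIn lo U := by
        unfold cutIn flowBtw
        exact Finset.sum_congr rfl fun u hu => Finset.sum_congr rfl fun v hv =>
          (hsat v hv u hu).2
      have hcutOut : cutOut f U = cutOut hi U := by
        unfold cutOut flowBtw
        exact Finset.sum_congr rfl fun u hu => Finset.sum_congr rfl fun v hv =>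
          (hsat u hu v hv).1
      have hc := hcut Uᶜ
      have e1 : cutOut lo Uᶜ = cutIn lo U := by unfold cutOut cutIn; rw [compl_compl]
      have e2 : cutIn hi Uᶜ = cutOut hi U := by unfold cutOut cutIn; rw [compl_compl]
      rw [e1, e2] at hc
      rw [hcutIn, hcutOut] at hpos
      linarith
  have hzero : ∀ v, excess f v = 0 := by
    intro v
    exact (Finset.sum_eq_zero_iff_of_nonpos fun u _ => not_lt.1 (hnopos u)).1
      (sum_excess f) v (Finset.mem_univ v)
  intro v
  have := hzero v
  unfold excess at this
  linarith

lemma phi_continuous : Continuous (phi : (V → V → ℝ) → ℝ) := by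
  unfold phi excess
  apply continuous_finset_sum
  intro v _
  apply Continuous.max _ continuous_const
  apply Continuous.sub
  · exact continuous_finset_sum _ fun u _ => (continuous_apply v).comp (continuous_apply u)
  · exact continuous_finset_sum _ fun w _ => (continuous_apply w).comp (continuous_apply v)

end Hoffman

theorem stmt8 (lo hi : V → V → ℝ) (hbounds : ∀ u v, 0 ≤ lo u v ∧ lo u v ≤ hi u v) :
    ((∃ f : V → V → ℝ, (∀ u v, lo u v ≤ f u v ∧ f u v ≤ hi u v) ∧ IsCirculation f) ↔
      (∀ U : Finset V, cutOut lo U ≤ cutIn hi U)) ∧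
    ((∀ u v, ∃ n : ℤ, lo u v = n) → (∀ u v, ∃ n : ℤ, hi u v = n) →
      (∀ U : Finset V, cutOut lo U ≤ cutIn hi U) →
      ∃ f : V → V → ℝ, (∀ u v, ∃ n : ℤ, f u v = n) ∧
        (∀ u v, lo u v ≤ f u v ∧ f u v ≤ hi u v) ∧ IsCirculation f) := by
  classical
  have hbox_lo : ∀ u v, lo u v ≤ lo u v ∧ lo u v ≤ hi u v :=
    fun u v => ⟨le_refl _, (hbounds u v).2⟩
  constructor
  · constructor
    · rintro ⟨f, hf, hcirc⟩ U
      have hex0 : ∀ v, Hoffman.excess f v = 0 := by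
        intro v; unfold Hoffman.excess; rw [hcirc v]; ring
      have hsum : ∑ v ∈ U, Hoffman.excess f v = 0 := Finset.sum_eq_zero fun v _ => hex0 v
      rw [Hoffman.sum_excess_subset] at hsum
      have h1 : cutOut lo U ≤ cutOut f U := by
        unfold cutOut flowBtw
        exact Finset.sum_le_sum fun u _ => Finset.sum_le_sum fun v _ => (hf u v).1
      have h2 : cutIn f U ≤ cutIn hi U := by
        unfold cutIn flowBtw
        exact Finset.sum_le_sum fun u _ => Finset.sum_le_sum fun v _ => (hf u v).2
      linarith
    · intro hcut
      set S : Set (V → V → ℝ) :=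
        Set.univ.pi fun u => Set.univ.pi fun v => Set.Icc (lo u v) (hi u v) with hS
      have hmem : ∀ g : V → V → ℝ,
          g ∈ S ↔ ∀ u v, lo u v ≤ g u v ∧ g u v ≤ hi u v := by
        intro g
        simp only [hS, Set.mem_pi, Set.mem_univ, Set.mem_Icc, forall_true_left]
      have hSc : IsCompact S :=
        isCompact_univ_pi fun u => isCompact_univ_pi fun v => isCompact_Icc
      have hSne : S.Nonempty := ⟨lo, (hmem lo).2 hbox_lo⟩
      obtain ⟨f, hfS, hmin⟩ := hSc.exists_isMinOn hSne Hoffman.phi_continuous.continuousOn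
      refine ⟨f, (hmem f).1 hfS, ?_⟩
      exact Hoffman.exists_circulation lo hi hcut (fun _ => True)
        (fun _ _ _ _ _ _ => trivial) f ((hmem f).1 hfS) trivial
        (fun g hg _ => isMinOn_iff.1 hmin g ((hmem g).2 hg))
  · intro hlo hhi hcut
    set T : Set ℕ := {n : ℕ | ∃ g : V → V → ℝ,
      (∀ u v, lo u v ≤ g u v ∧ g u v ≤ hi u v) ∧ Hoffman.IntV g ∧
        Hoffman.phi g = (n : ℝ)} with hT
    have hTne : T.Nonempty := by
      obtain ⟨n, hn⟩ := Hoffman.phi_nat (g := lo) hlo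
      exact ⟨n, lo, hbox_lo, hlo, hn⟩
    obtain ⟨n, hnT, hmin⟩ := Nat.lt_wfRel.wf.has_min T hTne
    obtain ⟨f, hbox, hInt, hphi⟩ := hnT
    have hP : ∀ (g : V → V → ℝ) (a b : V) (ε : ℝ), Hoffman.IntV g →
        (Hoffman.IntV g → Hoffman.IntV lo → Hoffman.IntV hi → ∃ k : ℤ, ε = (k : ℝ)) →
        Hoffman.IntV (Hoffman.upd g a b ε) := by
      intro g a b ε hg himp u v
      obtain ⟨k, hk⟩ := himp hg hlo hhi
      by_cases h : u = a ∧ v = b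
      · obtain ⟨rfl, rfl⟩ := h
        rw [Hoffman.upd_self, hk]
        exact Hoffman.int_add (hg u v) ⟨k, rfl⟩
      · rw [Hoffman.upd_of_ne _ _ _ _ h]; exact hg u v
    have hmin' : ∀ g, (∀ u v, lo u v ≤ g u v ∧ g u v ≤ hi u v) → Hoffman.IntV g →
        Hoffman.phi f ≤ Hoffman.phi g := by
      intro g hgbox hgint
      obtain ⟨m, hm⟩ := Hoffman.phi_nat hgint
      have hmT : m ∈ T := ⟨g, hgbox, hgint, hm⟩
      have hnm := hmin m hmT
      rw [hphi, hm]
      exact_mod_cast Nat.le_of_not_lt hnm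
    exact ⟨f, hInt, hbox,
      Hoffman.exists_circulation lo hi hcut Hoffman.IntV hP f hbox hInt hmin'⟩
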